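/- Let S be a commutative topological ring with identity that is topologically simple, i.e. its only closed ideals are S and {0}. Let x₁, …, xₙ ∈ S be distinct points and y₁, …, yₙ ∈ S arbitrary values. Then for every neighborhood ε of 0 in S there exists a polynomial p ∈ S[x] such that p(xᵢ) − yᵢ ∈ ε for every 1 ≤ i ≤ n. -/

import Mathlib

open Pointwise Polynomial Finset

/-- Approximate Lagrange interpolation in topologically simple rings: let `S` be a
commutative topological ring whose only closed ideals are `⊥` and `⊤`, let `x 0, …, x (n-1)`
be distinct points of `S` and `y 0, …, y (n-1)` arbitrary values. Then for every neighborhood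
`ε` of `0` there is a polynomial `p ∈ S[X]` with `p (x i) - y i ∈ ε` for all `i`. -/
theorem approximate_lagrange_interpolation {S : Type*} [CommRing S] [TopologicalSpace S]
    [IsTopologicalRing S] [T2Space S]
    (hsimple : ∀ I : Ideal S, IsClosed (I : Set S) → I = ⊥ ∨ I = ⊤)
    {n : ℕ} (x y : Fin n → S) (hx : Function.Injective x) :
    ∀ ε ∈ nhds (0 : S), ∃ p : Polynomial S, ∀ i : Fin n,
      Polynomial.eval (x i) p - y i ∈ ε := by
  intro ε hε
  rcases subsingleton_or_nontrivial S with hsub | hnt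
  · exact ⟨0, fun i => by
      have h0 : (0 : S) ∈ ε := mem_of_mem_nhds hε
      rwa [Subsingleton.elim (Polynomial.eval (x i) 0 - y i) (0 : S)]⟩
  -- S has no zero divisors
  have hnzd : ∀ a b : S, a * b = 0 → a = 0 ∨ b = 0 := by
    intro a b hab
    by_cases hb : b = 0
    · exact Or.inr hb
    · left
      set I : Ideal S :=
        { carrier := {s | s * b = 0}
          add_mem' := by intro u v hu hv; simp only [Set.mem_setOf_eq] at *
                         rw [add_mul, hu, hv, add_zero]
          zero_mem' := by simp
          smul_mem' := by intro c u hu; simp only [Set.mem_setOf_eq, smul_eq_mul] at *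
                          rw [mul_assoc, hu, mul_zero] } with hIdef
      have hclosed : IsClosed (I : Set S) := by
        have : (I : Set S) = (fun s => s * b) ⁻¹' {0} := by ext s; simp [hIdef]
        rw [this]
        exact isClosed_singleton.preimage (continuous_mul_right b)
      rcases hsimple I hclosed with h | h
      · have : a ∈ I := hab
        rwa [h, Ideal.mem_bot] at this
      · have h1 : (1 : S) ∈ I := by rw [h]; trivial
        have : (1 : S) * b = 0 := h1
        rw [one_mul] at this
        exact absurd this hb
  haveI : NoZeroDivisors S := ⟨fun {a b} h => hnzd a b h⟩
  set d : Fin n → S := fun i => ∏ j ∈ univ.erase i, (x i - x j) with hd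
  have hdne : ∀ i, d i ≠ 0 := by
    intro i
    apply Finset.prod_ne_zero_iff.2
    intro j hj
    exact sub_ne_zero.2 fun h => (mem_erase.1 hj).1 (hx h).symm
  have key : ∀ i : Fin n, ∃ s : S, s * d i - y i ∈ ε := by
    intro i
    set J : Ideal S := (Ideal.span {d i}).topologicalClosure with hJ
    have hJc : IsClosed (J : Set S) := Submodule.isClosed_topologicalClosure _
    have hmem : d i ∈ J :=
      Submodule.le_topologicalClosure _ (Ideal.subset_span rfl)
    rcases hsimple J hJc with h | h
    · rw [h, Ideal.mem_bot] at hmem; exact absurd hmem (hdne i)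
    · have hy : y i ∈ closure ((Ideal.span {d i} : Ideal S) : Set S) := by
        have : y i ∈ J := by rw [h]; trivial
        exact this
      have hU : (fun z => z - y i) ⁻¹' ε ∈ nhds (y i) := by
        apply ContinuousAt.preimage_mem_nhds (by fun_prop)
        simpa using hε
      rcases mem_closure_iff_nhds.1 hy _ hU with ⟨t, htU, htJ⟩
      rcases Ideal.mem_span_singleton.1 htJ with ⟨s, rfl⟩
      exact ⟨s, by simpa [mul_comm] using htU⟩
  choose s hs using key
  refine ⟨∑ i, C (s i) * ∏ j ∈ univ.erase i, (X - C (x j)), ?_⟩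
  intro k
  have heval : Polynomial.eval (x k)
      (∑ i, C (s i) * ∏ j ∈ univ.erase i, (X - C (x j))) = s k * d k := by
    rw [eval_finset_sum]
    rw [Finset.sum_eq_single k]
    · simp [hd, eval_prod]
    · intro i _ hik
      rw [eval_mul, eval_prod]
      have : ∃ j ∈ univ.erase i, Polynomial.eval (x k) (X - C (x j)) = 0 := by
        exact ⟨k, mem_erase.2 ⟨hik.symm, mem_univ k⟩, by simp⟩
      rcases this with ⟨j, hj, hj0⟩
      rw [Finset.prod_eq_zero hj hj0, mul_zero]
    · intro h; exact absurd (mem_univ k) h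
  rw [heval]
  exact hs k
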